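/- Let X be a separable Banach space and S a countable norming set of functionals of norm at most 1. Then the set P_II' of sequences (xₙ) ∈ X^ℕ whose partial sums converge in the σ(X, S)-topology to some element of X is a Borel subset of X^ℕ. -/
import Mathlib


open Filter Topology MeasureTheory Finset

noncomputable section

/-- the set of σ(X,S)-weakly summable formal series is Borel in X^ℕ, for a
countable norming set S of functionals of norm at most 1. -/
theorem weakly_summable_set_borel {X : Type*} [NormedAddCommGroup X] [NormedSpace ℝ X]
    [CompleteSpace X] [TopologicalSpace.SeparableSpace X]
    (S : Set (X →L[ℝ] ℝ)) (hScount : S.Countable)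
    (hnorm : ∀ f ∈ S, ‖f‖ ≤ 1)
    (hnorming : ∀ x : X, ‖x‖ = ⨆ f : S, ‖(f : X →L[ℝ] ℝ) x‖) :
    MeasurableSet[borel (ℕ → X)]
      {x : ℕ → X | ∃ l : X, ∀ f ∈ S,
        Tendsto (fun N => f (∑ n ∈ Finset.range (N + 1), x n)) atTop (nhds (f l))} := by
  classical
  letI : MeasurableSpace (ℕ → X) := borel (ℕ → X)
  haveI : BorelSpace (ℕ → X) := ⟨rfl⟩
  obtain ⟨D, hDc, hDd⟩ := TopologicalSpace.exists_countable_dense X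
  set g : (X →L[ℝ] ℝ) → ℕ → (ℕ → X) → ℝ :=
    fun f N x => f (∑ n ∈ Finset.range (N + 1), x n) with hg
  have hgc : ∀ f N, Continuous (g f N) := fun f N =>
    f.continuous.comp (continuous_finset_sum _ fun n _ => continuous_apply n)
  have hgm : ∀ f N, Measurable (g f N) := fun f N => (hgc f N).measurable
  have key : {x : ℕ → X | ∃ l : X, ∀ f ∈ S,
      Tendsto (fun N => f (∑ n ∈ Finset.range (N + 1), x n)) atTop (nhds (f l))} =
      {x : ℕ → X | ∀ f ∈ S, ∃ L : ℝ, Tendsto (fun N => g f N x) atTop (nhds L)} ∩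
      ⋂ k : ℕ, ⋃ d ∈ D, ⋂ f ∈ S, ⋂ m : ℕ, ⋃ N : ℕ,
        {x : ℕ → X | m ≤ N ∧ |f d - g f N x| ≤ 1/(k+1) + 1/(m+1)} := by
    ext x
    simp only [Set.mem_setOf_eq, Set.mem_inter_iff, Set.mem_iInter, Set.mem_iUnion,
      exists_prop]
    constructor
    · rintro ⟨l, hl⟩
      refine ⟨fun f hf => ⟨f l, hl f hf⟩, fun k => ?_⟩
      obtain ⟨d, hdD, hdl⟩ := hDd.exists_dist_lt l (show (0:ℝ) < 1/(k+1) by positivity)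
      refine ⟨d, hdD, fun f hf m => ?_⟩
      have h1 : |f d - f l| ≤ 1/(k+1) := by
        have h2 : ‖f (d - l)‖ ≤ ‖f‖ * ‖d - l‖ := f.le_opNorm _
        have h3 : ‖d - l‖ < 1/(k+1) := by
          rw [← dist_eq_norm, dist_comm]; exact hdl
        have h4 : ‖f‖ * ‖d - l‖ ≤ 1 * ‖d - l‖ :=
          mul_le_mul_of_nonneg_right (hnorm f hf) (norm_nonneg _)
        have : |f d - f l| = ‖f (d - l)‖ := by
          rw [map_sub, Real.norm_eq_abs]
        rw [this]
        nlinarith [norm_nonneg (d - l)]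
      have hpos : (0:ℝ) < 1/(m+1) := by positivity
      obtain ⟨M, hM⟩ := Metric.tendsto_atTop.mp (hl f hf) (1/(m+1)) hpos
      refine ⟨max M m, le_max_right _ _, ?_⟩
      have h5 := hM (max M m) (le_max_left _ _)
      have h6 : |g f (max M m) x - f l| < 1/(m+1) := by
        simpa only [Real.dist_eq] using h5
      calc |f d - g f (max M m) x|
          ≤ |f d - f l| + |f l - g f (max M m) x| := abs_sub_le _ _ _
        _ ≤ 1/(k+1) + 1/(m+1) := by
            rw [abs_sub_comm (f l)]
            exact add_le_add h1 h6.le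
    · rintro ⟨hconv, happrox⟩
      choose L hL using hconv
      choose d hdD hd using happrox
      -- each d k is within 1/(k+1) of the "limit functional values"
      have hclose : ∀ k, ∀ f, ∀ hf : f ∈ S, |f (d k) - L f hf| ≤ 1/(k+1) := by
        intro k f hf
        refine le_of_forall_pos_le_add fun ε hε => ?_
        obtain ⟨m₀, hm₀⟩ := exists_nat_one_div_lt (show (0:ℝ) < ε/2 by positivity)
        obtain ⟨M, hM⟩ := Metric.tendsto_atTop.mp (hL f hf) (ε/2) (by positivity)
        obtain ⟨N, hNm, hN⟩ := hd k f hf (max M m₀)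
        have hNM : M ≤ N := le_trans (le_max_left _ _) hNm
        have h7 : |g f N x - L f hf| < ε/2 := by
          simpa only [Real.dist_eq] using hM N hNM
        have h8 : 1/((max M m₀ : ℕ) + 1 : ℝ) ≤ 1/(m₀+1) := by
          apply one_div_le_one_div_of_le (by positivity)
          have : (m₀ : ℝ) ≤ (max M m₀ : ℕ) := by exact_mod_cast le_max_right M m₀
          linarith
        calc |f (d k) - L f hf|
            ≤ |f (d k) - g f N x| + |g f N x - L f hf| := abs_sub_le _ _ _
          _ ≤ (1/(k+1) + 1/((max M m₀ : ℕ) + 1 : ℝ)) + ε/2 := add_le_add hN h7.le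
          _ ≤ 1/(k+1) + ε := by linarith
      -- d is Cauchy
      have hcauchy : CauchySeq d := by
        apply cauchySeq_of_le_tendsto_0 (fun N : ℕ => 2 * (1/((N:ℝ)+1)))
        · intro n m N hn hm
          rw [dist_eq_norm, hnorming]
          apply Real.iSup_le _ (by positivity)
          rintro ⟨f, hf⟩
          have h1 := hclose n f hf
          have h2 := hclose m f hf
          have h3 : 1/((n:ℝ)+1) ≤ 1/((N:ℝ)+1) := by
            apply one_div_le_one_div_of_le (by positivity)
            exact_mod_cast Nat.succ_le_succ hn
          have h4 : 1/((m:ℝ)+1) ≤ 1/((N:ℝ)+1) := by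
            apply one_div_le_one_div_of_le (by positivity)
            exact_mod_cast Nat.succ_le_succ hm
          have h5 : ‖f (d n - d m)‖ = |f (d n) - f (d m)| := by
            rw [map_sub, Real.norm_eq_abs]
          rw [h5]
          calc |f (d n) - f (d m)|
              ≤ |f (d n) - L f hf| + |L f hf - f (d m)| := abs_sub_le _ _ _
            _ ≤ 1/((n:ℝ)+1) + 1/((m:ℝ)+1) := by
                rw [abs_sub_comm (L f hf)]
                exact add_le_add h1 h2
            _ ≤ 2 * (1/((N:ℝ)+1)) := by linarith
        · have := tendsto_one_div_add_atTop_nhds_zero_nat.const_mul (2:ℝ)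
          simpa using this
      obtain ⟨l, hl⟩ := cauchySeq_tendsto_of_complete hcauchy
      refine ⟨l, fun f hf => ?_⟩
      have hfl : Tendsto (fun k => f (d k)) atTop (nhds (f l)) :=
        (f.continuous.tendsto l).comp hl
      have hfL : Tendsto (fun k => f (d k)) atTop (nhds (L f hf)) := by
        rw [tendsto_iff_dist_tendsto_zero]
        apply squeeze_zero (fun k => dist_nonneg) (fun k => ?_)
            tendsto_one_div_add_atTop_nhds_zero_nat
        rw [Real.dist_eq]
        exact hclose _ f hf
      have : f l = L f hf := tendsto_nhds_unique hfl hfL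
      rw [this]
      exact hL f hf
  rw [key]
  refine MeasurableSet.inter ?_ ?_
  · have heq : {x : ℕ → X | ∀ f ∈ S, ∃ L : ℝ, Tendsto (fun N => g f N x) atTop (nhds L)}
        = ⋂ f ∈ S, {x : ℕ → X | ∃ L : ℝ, Tendsto (fun N => g f N x) atTop (nhds L)} := by
      ext x; simp
    rw [heq]
    exact MeasurableSet.biInter hScount fun f _ =>
      measurableSet_exists_tendsto fun N => hgm f N
  · refine MeasurableSet.iInter fun k => ?_
    refine MeasurableSet.biUnion hDc fun d _ => ?_
    refine MeasurableSet.biInter hScount fun f _ => ?_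
    refine MeasurableSet.iInter fun m => ?_
    refine MeasurableSet.iUnion fun N => ?_
    by_cases hmN : m ≤ N
    · have heq : {x : ℕ → X | m ≤ N ∧ |f d - g f N x| ≤ 1/(k+1) + 1/(m+1)}
          = {x : ℕ → X | |f d - g f N x| ≤ 1/(k+1) + 1/(m+1)} := by
        ext x; simp [hmN]
      rw [heq]
      exact measurableSet_le ((measurable_const.sub (hgm f N)).abs) measurable_const
    · have heq : {x : ℕ → X | m ≤ N ∧ |f d - g f N x| ≤ 1/(k+1) + 1/(m+1)}
          = (∅ : Set (ℕ → X)) := by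
        ext x; simp [hmN]
      rw [heq]
      exact MeasurableSet.empty
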